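/- Let X, Y, Z be limit spaces and H : Z × X → Y continuous for the product convergence on Z × X, meaning: for every proper filter K on Z × X and every (z, x), if Filter.map Prod.fst K → z and Filter.map Prod.snd K → x then Filter.map H K → H(z, x). Then: (i) for every z ∈ Z the map x ↦ H(z, x) is a continuous map X → Y; (ii) the curried map Ĥ : Z → C(X,Y) defined by Ĥ(z) = H(z, ·) is continuous into the continuous convergence: for every proper filter F on Z with F → z, Filter.map Ĥ F converges continuously to Ĥ(z). -/

import Mathlib

open Filter

/-- A limit convergence on `X`: a convergence relation between proper filters on `X`
and points of `X` which is centered, isotone and stable. -/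
structure LimitConv (X : Type*) where
  /-- the convergence relation -/
  conv : Filter X → X → Prop
  /-- constant nets converge: `pure x → x` -/
  centered : ∀ x : X, conv (pure x) x
  /-- subnets converge: if `F → x`, `G ≤ F` and `G` is proper, then `G → x` -/
  isotone : ∀ (F G : Filter X) (x : X), F.NeBot → conv F x → G ≤ F → G.NeBot → conv G x
  /-- mixings converge: if `F → x` and `G → x` then `F ⊓ G → x` -/
  stable : ∀ (F G : Filter X) (x : X), F.NeBot → G.NeBot → conv F x → conv G x →
    conv (F ⊓ G) x

/-- `C(X,Y)`: the continuous maps between two types equipped with convergence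
relations, i.e. maps sending every proper filter converging to `x` to a filter
converging to the image of `x`. -/
def ContMap {X Y : Type*} (convX : Filter X → X → Prop) (convY : Filter Y → Y → Prop) :=
  {f : X → Y // ∀ (F : Filter X) (x : X), F.NeBot → convX F x →
    convY (Filter.map f F) (f x)}

/-- The continuous convergence on `C(X,Y)`: a filter `𝓕` converges continuously
to `f` iff for every `x` and every proper filter `G → x` in `X`, the filter of
evaluations `⟨g, y⟩ ↦ g y` of `𝓕 ×ˢ G` converges to `f x` in `Y`. -/
def ContConv {X Y : Type*} (convX : Filter X → X → Prop) (convY : Filter Y → Y → Prop)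
    (𝓕 : Filter (ContMap convX convY)) (f : ContMap convX convY) : Prop :=
  ∀ (x : X) (G : Filter X), G.NeBot → convX G x →
    convY (Filter.map (fun p : ContMap convX convY × X => p.1.val p.2) (𝓕 ×ˢ G)) (f.val x)

/-- Currying: if `H : Z × X → Y` is continuous for the product convergence, then each
slice `H (z, ·)` is a continuous map `X → Y`, and the curried map
`Ĥ : Z → C(X,Y)`, `Ĥ z = H (z, ·)`, is continuous into the continuous convergence. -/
theorem curry_continuous {Z X Y : Type*} (LZ : LimitConv Z) (LX : LimitConv X)
    (LY : LimitConv Y) (H : Z × X → Y)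
    (hH : ∀ (K : Filter (Z × X)) (z : Z) (x : X), K.NeBot →
      LZ.conv (Filter.map Prod.fst K) z → LX.conv (Filter.map Prod.snd K) x →
      LY.conv (Filter.map H K) (H (z, x))) :
    (∀ z : Z, ∀ (F : Filter X) (x : X), F.NeBot → LX.conv F x →
      LY.conv (Filter.map (fun x : X => H (z, x)) F) (H (z, x))) ∧
    (∃ Hhat : Z → ContMap LX.conv LY.conv,
      (∀ (z : Z) (x : X), (Hhat z).val x = H (z, x)) ∧
      (∀ (F : Filter Z) (z : Z), F.NeBot → LZ.conv F z →
        ContConv LX.conv LY.conv (Filter.map Hhat F) (Hhat z))) := by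
  have part1 : ∀ z : Z, ∀ (F : Filter X) (x : X), F.NeBot → LX.conv F x →
      LY.conv (Filter.map (fun x : X => H (z, x)) F) (H (z, x)) := by
    intro z F x hF hFx
    have h1 : Filter.map Prod.fst (Filter.map (fun x : X => (z, x)) F) = pure z := by
      rw [Filter.map_map]
      exact (Filter.map_const)
    have h2 : Filter.map Prod.snd (Filter.map (fun x : X => (z, x)) F) = F := by
      rw [Filter.map_map]; exact Filter.map_id
    have := hH (Filter.map (fun x : X => (z, x)) F) z x (Filter.map_neBot)
      (h1 ▸ LZ.centered z) (h2 ▸ hFx)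
    rwa [Filter.map_map] at this
  refine ⟨part1, ⟨fun z => ⟨fun x => H (z, x), part1 z⟩, fun z x => rfl, ?_⟩⟩
  intro F z hF hFz x G hG hGx
  have key : Filter.map (fun p : ContMap LX.conv LY.conv × X => p.1.val p.2)
      (Filter.map (fun z => (⟨fun x => H (z, x), part1 z⟩ : ContMap LX.conv LY.conv)) F ×ˢ G)
      = Filter.map H (F ×ˢ G) := by
    rw [← Filter.map_id (f := G), Filter.prod_map_map_eq]; erw [Filter.map_map]
  erw [key]
  exact hH (F ×ˢ G) z x (Filter.prod_neBot.mpr ⟨hF, hG⟩)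
    (by rwa [Filter.map_fst_prod]) (by rwa [Filter.map_snd_prod])
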